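/- Let m ≥ 1 be an integer, let 0 < x_1 < x_2 < ... < x_m be real numbers, and let β_1, ..., β_m be purely imaginary complex numbers. For j = 1,...,m define d^{(1)}_{1,x_j} := (ω − 5) β_j / (6 (ω − 1) x_j) + Σ_{k=1, k≠j}^m 2 (ω − 1) x_k^{2/3} β_k / ( 3 x_j^{1/3} (x_j^{2/3} − x_k^{2/3}) (x_j^{2/3} − ω x_k^{2/3}) ), where ω = e^{2πi/3}. Then Σ_{j=1}^m 2 i β_j x_j · Im( d^{(1)}_{1,x_j} ) = Σ_{j=1}^m β_j², where Im denotes the imaginary part (a real number, viewed as a complex number in the identity). -/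

import Mathlib

open Real Complex Finset

noncomputable section

/-- `ω = e^{2πi/3}`. -/
def pOmega : ℂ := Complex.exp (2 * Real.pi * Complex.I / 3)

/-- The coefficient `d^{(1)}_{1,x_j}` from Subsection 4.3.2. -/
def pD1 {m : ℕ} (x : Fin m → ℝ) (β : Fin m → ℂ) (j : Fin m) : ℂ :=
  (pOmega - 5) * β j / (6 * (pOmega - 1) * x j)
    + ∑ k ∈ Finset.univ.filter (fun k => k ≠ j),
        2 * (pOmega - 1) * (x k ^ ((2 : ℝ) / 3) : ℝ) * β k
          / (3 * (x j ^ ((1 : ℝ) / 3) : ℝ)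
              * (((x j ^ ((2 : ℝ) / 3) : ℝ) : ℂ) - ((x k ^ ((2 : ℝ) / 3) : ℝ) : ℂ))
              * (((x j ^ ((2 : ℝ) / 3) : ℝ) : ℂ) - pOmega * ((x k ^ ((2 : ℝ) / 3) : ℝ) : ℂ)))

lemma pOmega_re : pOmega.re = -(1/2) := by
  have : (2 * Real.pi * Complex.I / 3) = ((2*Real.pi/3 : ℝ) : ℂ) * Complex.I := by
    push_cast; ring
  rw [pOmega, this, Complex.exp_ofReal_mul_I_re]
  have : (2*Real.pi/3 : ℝ) = Real.pi - Real.pi/3 := by ring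
  rw [this, Real.cos_pi_sub, Real.cos_pi_div_three]

lemma pOmega_im : pOmega.im = Real.sqrt 3 / 2 := by
  have : (2 * Real.pi * Complex.I / 3) = ((2*Real.pi/3 : ℝ) : ℂ) * Complex.I := by
    push_cast; ring
  rw [pOmega, this, Complex.exp_ofReal_mul_I_im]
  have : (2*Real.pi/3 : ℝ) = Real.pi - Real.pi/3 := by ring
  rw [this, Real.sin_pi_sub, Real.sin_pi_div_three]

lemma diag_im (x b : ℝ) (hx : x ≠ 0) :
    ((pOmega - 5) * ((b:ℂ) * Complex.I) / (6 * (pOmega - 1) * (x:ℂ))).im = b / (2*x) := by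
  have hs : Real.sqrt 3 ^ 2 = 3 := Real.sq_sqrt (by norm_num)
  set s := Real.sqrt 3 with hsdef
  have h1 : pOmega.re = -(1/2) := pOmega_re
  have h2 : pOmega.im = s / 2 := pOmega_im
  simp only [Complex.div_im, Complex.mul_re, Complex.mul_im, Complex.sub_re, Complex.sub_im,
    Complex.ofReal_re, Complex.ofReal_im, Complex.I_re, Complex.I_im, Complex.normSq_apply,
    h1, h2, Complex.one_re, Complex.one_im, Complex.re_ofNat, Complex.im_ofNat]
  ring_nf
  simp only [hs]
  field_simp
  ring

/-- The real coefficient giving the imaginary part of the off-diagonal terms. -/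
def pf (a c : ℝ) : ℝ := -(c^2*(a^2+c^2))/(a*(a^2-c^2)*(a^4+a^2*c^2+c^4))

set_option maxHeartbeats 1600000 in
lemma off_im (a c b : ℝ) (ha : 0 < a) (hc : 0 < c) (hne : a ≠ c) :
    (2 * (pOmega - 1) * ((c^2 : ℝ) : ℂ) * ((b:ℂ) * Complex.I)
      / (3 * (a:ℂ) * (((a^2 : ℝ) : ℂ) - ((c^2 : ℝ) : ℂ))
          * (((a^2 : ℝ) : ℂ) - pOmega * ((c^2 : ℝ) : ℂ)))).im
      = b * pf a c := by
  have hs : Real.sqrt 3 ^ 2 = 3 := Real.sq_sqrt (by norm_num)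
  set s := Real.sqrt 3 with hsdef
  have h1 : pOmega.re = -(1/2) := pOmega_re
  have h2 : pOmega.im = s / 2 := pOmega_im
  have ha0 : a ≠ 0 := ha.ne'
  have hc0 : c ≠ 0 := hc.ne'
  have hac : a^2 - c^2 ≠ 0 := by
    intro h
    exact hne (by nlinarith)
  have hq : a^4 + a^2*c^2 + c^4 ≠ 0 := by positivity
  have hd1 : -(c^6*a) + a^7 ≠ 0 := by
    intro h; exact (mul_ne_zero (mul_ne_zero ha0 hac) hq) (by linear_combination h)
  have hd2 : -(c^2*a^8) - c^6*a^4 + c^8*a^2 + a^10 ≠ 0 := by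
    intro h
    exact (mul_ne_zero (mul_ne_zero (pow_ne_zero 2 ha0) (mul_ne_zero hac hac)) hq)
      (by linear_combination h)
  have hd3 : -(c ^ 2 * a ^ 8 * 9216) - c ^ 6 * a ^ 4 * 9216 + c ^ 8 * a ^ 2 * 9216 + a ^ 10 * 9216 ≠ 0 := by
    intro h; exact hd2 (by linear_combination h/9216)
  have hd4 : -(c ^ 2 * a ^ 8 * 18432) - c ^ 6 * a ^ 4 * 18432 + c ^ 8 * a ^ 2 * 18432 + a ^ 10 * 18432 ≠ 0 := by
    intro h; exact hd2 (by linear_combination h/18432)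
  rw [pf]
  simp only [Complex.div_im, Complex.mul_re, Complex.mul_im, Complex.sub_re, Complex.sub_im,
    Complex.ofReal_re, Complex.ofReal_im, Complex.I_re, Complex.I_im, Complex.normSq_apply,
    h1, h2, Complex.one_re, Complex.one_im, Complex.re_ofNat, Complex.im_ofNat]
  ring_nf
  simp only [hs]
  field_simp
  ring_nf
  have hE : (-c ^ 6 + a ^ 6) ≠ 0 := by
    intro h; exact (mul_ne_zero hac hq) (by linear_combination h)
  have hD : (-(c ^ 2 * a ^ 6 * 72) - c ^ 6 * a ^ 2 * 72 + c ^ 8 * 72 + a ^ 8 * 72) ≠ 0 := by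
    intro h; exact (mul_ne_zero hac hE) (by linear_combination h/72)
  have hD' : (-(c ^ 2 * a ^ 6) - c ^ 6 * a ^ 2 + c ^ 8 + a ^ 8) ≠ 0 := by
    intro h; exact (mul_ne_zero hac hE) (by linear_combination h)
  field_simp
  linear_combination (-(b * (a ^ 2 + c ^ 2))) * mul_inv_cancel₀ hD'

lemma pf_antisym (a c : ℝ) (ha : 0 < a) (hc : 0 < c) (hne : a ≠ c) :
    a^3 * pf a c = -(c^3 * pf c a) := by
  have ha0 : a ≠ 0 := ha.ne'
  have hc0 : c ≠ 0 := hc.ne'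
  have hac : a^2 - c^2 ≠ 0 := by
    intro h; exact hne (by nlinarith)
  have hca : c^2 - a^2 ≠ 0 := by
    intro h; exact hne (by nlinarith)
  have hq : a^4 + a^2*c^2 + c^4 ≠ 0 := by positivity
  have hq' : c^4 + c^2*a^2 + a^4 ≠ 0 := by positivity
  rw [pf, pf]
  field_simp
  ring

theorem pearcey_d1_imaginary_part_sum
    (m : ℕ) (hm : 1 ≤ m) (x : Fin m → ℝ)
    (hxpos : ∀ j, 0 < x j) (hxmono : StrictMono x)
    (β : Fin m → ℂ) (hβ : ∀ j, (β j).re = 0) :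
    (∑ j, 2 * Complex.I * β j * (x j : ℂ) * ((pD1 x β j).im : ℂ)) = ∑ j, β j ^ 2 := by
  classical
  obtain ⟨b, hβ'⟩ : ∃ b : Fin m → ℝ, ∀ j, β j = (b j : ℂ) * Complex.I :=
    ⟨fun j => (β j).im, fun j => by apply Complex.ext <;> simp [hβ j]⟩
  have hapos : ∀ j, (0:ℝ) < x j ^ ((1:ℝ)/3) := fun j => Real.rpow_pos_of_pos (hxpos j) _
  have ha2 : ∀ j, x j ^ ((2:ℝ)/3) = (x j ^ ((1:ℝ)/3))^2 := by
    intro j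
    rw [← Real.rpow_natCast (x j ^ ((1:ℝ)/3)) 2, ← Real.rpow_mul (hxpos j).le]
    norm_num
  have ha3 : ∀ j, (x j ^ ((1:ℝ)/3))^3 = x j := by
    intro j
    rw [← Real.rpow_natCast (x j ^ ((1:ℝ)/3)) 3, ← Real.rpow_mul (hxpos j).le]
    norm_num
  have hane : ∀ j k : Fin m, j ≠ k → x j ^ ((1:ℝ)/3) ≠ x k ^ ((1:ℝ)/3) := by
    intro j k hjk h
    apply hjk
    apply hxmono.injective
    rw [← ha3 j, ← ha3 k, h]
  -- imaginary part of pD1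
  have him : ∀ j, (pD1 x β j).im
      = b j / (2 * x j)
        + ∑ k ∈ Finset.univ.filter (fun k => k ≠ j),
            b k * pf (x j ^ ((1:ℝ)/3)) (x k ^ ((1:ℝ)/3)) := by
    intro j
    unfold pD1
    rw [Complex.add_im, Complex.im_sum]
    congr 1
    · rw [hβ' j]
      exact diag_im (x j) (b j) (hxpos j).ne'
    · refine Finset.sum_congr rfl fun k hk => ?_
      have hkj : k ≠ j := by simpa using hk
      rw [hβ' k, ha2 j, ha2 k]
      exact off_im (x j ^ ((1:ℝ)/3)) (x k ^ ((1:ℝ)/3)) (b k)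
        (hapos j) (hapos k) (hane j k hkj.symm)
  -- the double sum of antisymmetric terms vanishes
  have hS : (∑ j, ∑ k ∈ Finset.univ.filter (fun k => k ≠ j),
      2 * b j * x j * (b k * pf (x j ^ ((1:ℝ)/3)) (x k ^ ((1:ℝ)/3)))) = 0 := by
    set S := ∑ j, ∑ k ∈ Finset.univ.filter (fun k => k ≠ j),
      2 * b j * x j * (b k * pf (x j ^ ((1:ℝ)/3)) (x k ^ ((1:ℝ)/3))) with hSdef
    have hswap : S = ∑ j, ∑ k ∈ Finset.univ.filter (fun k => k ≠ j),
        2 * b k * x k * (b j * pf (x k ^ ((1:ℝ)/3)) (x j ^ ((1:ℝ)/3))) := by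
      rw [hSdef]
      exact Finset.sum_comm' (by intro p q; simp [ne_comm, eq_comm])
    have h2S : S + S = 0 := by
      nth_rewrite 2 [hswap]
      rw [hSdef, ← Finset.sum_add_distrib]
      refine Finset.sum_eq_zero fun j _ => ?_
      rw [← Finset.sum_add_distrib]
      refine Finset.sum_eq_zero fun k hk => ?_
      have hkj : k ≠ j := by simpa using hk
      have hanti := pf_antisym (x j ^ ((1:ℝ)/3)) (x k ^ ((1:ℝ)/3))
        (hapos j) (hapos k) (hane j k hkj.symm)
      linear_combination (2 * b j * b k) * hanti
        - (2 * b j * b k * pf (x j ^ ((1:ℝ)/3)) (x k ^ ((1:ℝ)/3))) * (ha3 j)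
        - (2 * b j * b k * pf (x k ^ ((1:ℝ)/3)) (x j ^ ((1:ℝ)/3))) * (ha3 k)
    linarith
  -- main real identity
  have realmain : (∑ j, -(2 * b j * x j * (pD1 x β j).im)) = ∑ j, -(b j ^ 2) := by
    calc (∑ j, -(2 * b j * x j * (pD1 x β j).im))
        = ∑ j, (-(b j ^ 2)
            + -(∑ k ∈ Finset.univ.filter (fun k => k ≠ j),
                2 * b j * x j * (b k * pf (x j ^ ((1:ℝ)/3)) (x k ^ ((1:ℝ)/3))))) := by
          refine Finset.sum_congr rfl fun j _ => ?_
          rw [him j, mul_add, Finset.mul_sum]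
          have e : 2 * b j * x j * (b j / (2 * x j)) = b j ^ 2 := by
            field_simp [(hxpos j).ne']
          rw [e]
          ring
      _ = (∑ j, -(b j ^ 2))
            + ∑ j, -(∑ k ∈ Finset.univ.filter (fun k => k ≠ j),
                2 * b j * x j * (b k * pf (x j ^ ((1:ℝ)/3)) (x k ^ ((1:ℝ)/3)))) :=
          Finset.sum_add_distrib
      _ = ∑ j, -(b j ^ 2) := by
          rw [Finset.sum_neg_distrib, Finset.sum_neg_distrib, hS, neg_zero, add_zero]
  -- assemble
  have key : ∀ j, 2 * Complex.I * β j * (x j : ℂ) * ((pD1 x β j).im : ℂ)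
      = ((-(2 * b j * x j * (pD1 x β j).im) : ℝ) : ℂ) := by
    intro j
    rw [hβ' j]
    push_cast
    linear_combination (2 * (b j : ℂ) * (x j : ℂ) * ((pD1 x β j).im : ℂ)) * Complex.I_sq
  have keyr : ∀ j, β j ^ 2 = ((-(b j ^ 2) : ℝ) : ℂ) := by
    intro j
    rw [hβ' j]
    push_cast
    linear_combination ((b j : ℂ)^2) * Complex.I_sq
  calc (∑ j, 2 * Complex.I * β j * (x j : ℂ) * ((pD1 x β j).im : ℂ))
      = ∑ j, ((-(2 * b j * x j * (pD1 x β j).im) : ℝ) : ℂ) :=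
        Finset.sum_congr rfl fun j _ => key j
    _ = ((∑ j, -(2 * b j * x j * (pD1 x β j).im) : ℝ) : ℂ) := (Complex.ofReal_sum _ _).symm
    _ = ((∑ j, -(b j ^ 2) : ℝ) : ℂ) := by rw [realmain]
    _ = ∑ j, β j ^ 2 := by
        rw [Complex.ofReal_sum]
        exact Finset.sum_congr rfl fun j _ => (keyr j).symm
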